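/- For every natural number n ≥ 1, T(K_a(4n−1)) = T(K_a(4n+1)). -/

import Mathlib

open Finset

/-- A domino: a set of two cells sharing an edge. -/
def IsDomino (d : Finset (ℤ × ℤ)) : Prop :=
  ∃ c c' : ℤ × ℤ, |c.1 - c'.1| + |c.2 - c'.2| = 1 ∧ d = {c, c'}

/-- `P` is a tiling of the region `R`: a partition of `R` into dominoes. -/
def IsTiling (R : Set (ℤ × ℤ)) (P : Set (Finset (ℤ × ℤ))) : Prop :=
  (∀ d ∈ P, IsDomino d) ∧ P.PairwiseDisjoint id ∧ (⋃ d ∈ P, (d : Set (ℤ × ℤ))) = R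

/-- `T R`: the number of domino tilings of the region `R`. -/
noncomputable def numTilings (R : Set (ℤ × ℤ)) : ℕ :=
  Set.ncard {P : Set (Finset (ℤ × ℤ)) | IsTiling R P}

/-- The Aztec diamond of order `n`. -/
def AD (n : ℕ) : Set (ℤ × ℤ) :=
  {c | |2 * c.1 + 1| + |2 * c.2 + 1| ≤ 2 * (n : ℤ)}

/-- The quartered Aztec diamond `R(n)`. -/
def Rqad (n : ℕ) : Set (ℤ × ℤ) :=
  {c | c ∈ AD n ∧ 2 * ((c.1 + 1).fdiv 2) ≤ c.2 ∧ -2 * (c.1.fdiv 2) - 1 ≤ c.2}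

/-- The abutting quartered Aztec diamond `K_a(n)`. -/
def Ka (n : ℕ) : Set (ℤ × ℤ) :=
  {c | c ∈ AD n ∧ 2 * ((c.1 + 1).fdiv 2) ≤ c.2 ∧ -2 * ((c.1 + 1).fdiv 2) ≤ c.2}

/-- The non-abutting quartered Aztec diamond `K_na(n)`. -/
def Kna (n : ℕ) : Set (ℤ × ℤ) :=
  {c | c ∈ AD n ∧ -2 * ((c.1 + 1).fdiv 2) ≤ c.2 ∧ c.2 ≤ 2 * ((c.1 + 1).fdiv 2) - 1}

lemma mem_Ka {m : ℕ} {c : ℤ × ℤ} :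
    c ∈ Ka m ↔ ((2*c.1+1).natAbs + (2*c.2+1).natAbs ≤ 2*m ∧
      2*((c.1+1)/2) ≤ c.2 ∧ -2*((c.1+1)/2) ≤ c.2) := by
  simp only [Ka, AD, Set.mem_setOf_eq, Int.fdiv_eq_ediv_of_nonneg _ (by norm_num : (0:ℤ) ≤ 2),
    Int.abs_eq_natAbs]
  omega

lemma forced_step {R : Set (ℤ×ℤ)} {P : Set (Finset (ℤ×ℤ))} (hP : IsTiling R P)
    {c p : ℤ×ℤ} (hc : c ∈ R)
    (hnb : ∀ c' ∈ R, (c.1-c'.1).natAbs + (c.2-c'.2).natAbs = 1 →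
      c' = p ∨ ∃ e ∈ P, c' ∈ e ∧ c ∉ e) :
    ({c, p} : Finset (ℤ×ℤ)) ∈ P := by
  obtain ⟨hdom, hdisj, huniv⟩ := hP
  rw [← huniv] at hc
  simp only [Set.mem_iUnion, Finset.mem_coe, exists_prop] at hc
  obtain ⟨d, hdP, hcd⟩ := hc
  obtain ⟨u, v, huv, rfl⟩ := hdom d hdP
  have hsub : ∀ x ∈ ({u,v} : Finset (ℤ×ℤ)), x ∈ R := by
    intro x hx
    rw [← huniv]
    exact Set.mem_biUnion hdP hx
  have habs : (u.1-v.1).natAbs + (u.2-v.2).natAbs = 1 := by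
    rw [Int.abs_eq_natAbs, Int.abs_eq_natAbs] at huv
    exact_mod_cast huv
  rcases Finset.mem_insert.mp hcd with rfl | hcv
  · -- c = u, partner v
    rcases hnb v (hsub v (by simp)) (by omega) with rfl | ⟨e, heP, hve, hce⟩
    · exact hdP
    · have hne : e ≠ ({c, v} : Finset (ℤ×ℤ)) := fun h => hce (h ▸ by simp)
      have := Finset.disjoint_left.mp (hdisj heP hdP hne) hve
      simp at this
  · -- c = v, partner u
    rcases Finset.mem_singleton.mp hcv with rfl
    rcases hnb u (hsub u (by simp)) (by omega) with rfl | ⟨e, heP, hue, hce⟩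
    · rw [Finset.pair_comm] at hdP; exact hdP
    · have hne : e ≠ ({u, c} : Finset (ℤ×ℤ)) := fun h => hce (h ▸ by simp)
      have := Finset.disjoint_left.mp (hdisj heP hdP hne) hue
      simp at this

/-- Right forced chain domino. -/
def rdom (n : ℕ) (k : ℤ) : Finset (ℤ × ℤ) := {(k, 4*n - k), (k - 1, 4*n - k)}

/-- Left forced chain domino. -/
def ldom (n : ℕ) (k : ℤ) : Finset (ℤ × ℤ) := {(-k - 1, 4*n - k), (-k, 4*n - k)}

/-- The set of forced dominoes. -/
def Dset (n : ℕ) : Set (Finset (ℤ × ℤ)) :=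
  {d | ∃ k : ℤ, 0 ≤ k ∧ k ≤ 2*n ∧ d = rdom n k} ∪
  {d | ∃ k : ℤ, 1 ≤ k ∧ k ≤ 2*n ∧ d = ldom n k}

lemma force_r {n : ℕ} (hn : 1 ≤ n) {P : Set (Finset (ℤ×ℤ))}
    (hP : IsTiling (Ka (4*n+1)) P) :
    ∀ j : ℕ, j ≤ 2*n → rdom n (2*(n:ℤ) - j) ∈ P := by
  intro j
  induction j with
  | zero =>
    intro _
    have h : rdom n (2*(n:ℤ) - (0:ℕ)) =
        {((2*(n:ℤ), 2*(n:ℤ))), (2*(n:ℤ) - 1, 2*(n:ℤ))} := by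
      have h1 : 2*(n:ℤ) - ((0:ℕ):ℤ) = 2*(n:ℤ) := by push_cast; ring
      have h2 : 4*(n:ℤ) - 2*(n:ℤ) = 2*(n:ℤ) := by ring
      rw [rdom, h1, h2]
    rw [h]
    apply forced_step hP
    · rw [mem_Ka]; omega
    · rintro ⟨x, y⟩ hc' hadj
      rw [mem_Ka] at hc'
      simp only at hadj
      left
      have : x = 2*(n:ℤ) - 1 ∧ y = 2*(n:ℤ) := by omega
      simp [Prod.ext_iff, this.1, this.2]
  | succ j ih =>
    intro hj
    have hIH := ih (by omega)
    set k : ℤ := 2*(n:ℤ) - (j+1) with hk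
    have hcast : 2*(n:ℤ) - ((j:ℤ)+1) = k := by push_cast [hk]; ring
    have h : rdom n (2*(n:ℤ) - (j+1:ℕ)) = {((k, 4*(n:ℤ) - k)), (k - 1, 4*(n:ℤ) - k)} := by
      simp only [rdom]; push_cast; norm_num; rw [hcast]
    rw [h]
    have hk0 : 0 ≤ k := by omega
    have hk2 : k ≤ 2*(n:ℤ) - 1 := by omega
    apply forced_step hP
    · rw [mem_Ka]; omega
    · rintro ⟨x, y⟩ hc' hadj
      rw [mem_Ka] at hc'
      simp only at hadj
      have hcases : (x = k - 1 ∧ y = 4*(n:ℤ) - k) ∨ (x = k ∧ y = 4*(n:ℤ) - k - 1) := by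
        omega
      rcases hcases with ⟨hx, hy⟩ | ⟨hx, hy⟩
      · left; simp [Prod.ext_iff, hx, hy]
      · right
        refine ⟨rdom n (k+1), ?_, ?_, ?_⟩
        · have : (2*(n:ℤ) - j) = k + 1 := by omega
          rwa [this] at hIH
        · simp only [rdom, Finset.mem_insert, Finset.mem_singleton, Prod.ext_iff]
          omega
        · simp only [rdom, Finset.mem_insert, Finset.mem_singleton, Prod.ext_iff]
          push_neg
          constructor <;> intro h <;> omega

lemma force_l {n : ℕ} (hn : 1 ≤ n) {P : Set (Finset (ℤ×ℤ))}
    (hP : IsTiling (Ka (4*n+1)) P) :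
    ∀ j : ℕ, j ≤ 2*n - 1 → ldom n (2*(n:ℤ) - j) ∈ P := by
  intro j
  induction j with
  | zero =>
    intro _
    have h : ldom n (2*(n:ℤ) - (0:ℕ)) =
        {((-(2*(n:ℤ)) - 1, 2*(n:ℤ))), (-(2*(n:ℤ)), 2*(n:ℤ))} := by
      have h1 : 2*(n:ℤ) - ((0:ℕ):ℤ) = 2*(n:ℤ) := by push_cast; ring
      have h2 : 4*(n:ℤ) - 2*(n:ℤ) = 2*(n:ℤ) := by ring
      rw [ldom, h1, h2]
    rw [h]
    apply forced_step hP
    · rw [mem_Ka]; omega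
    · rintro ⟨x, y⟩ hc' hadj
      rw [mem_Ka] at hc'
      simp only at hadj
      left
      have : x = -(2*(n:ℤ)) ∧ y = 2*(n:ℤ) := by omega
      simp [Prod.ext_iff, this.1, this.2]
  | succ j ih =>
    intro hj
    have hIH := ih (by omega)
    set k : ℤ := 2*(n:ℤ) - (j+1) with hk
    have h : ldom n (2*(n:ℤ) - (j+1:ℕ)) = {((-k - 1, 4*(n:ℤ) - k)), (-k, 4*(n:ℤ) - k)} := by
      simp only [ldom]; push_cast; rw [hk]
    rw [h]
    have hk1 : 1 ≤ k := by omega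
    have hk2 : k ≤ 2*(n:ℤ) - 1 := by omega
    apply forced_step hP
    · rw [mem_Ka]; omega
    · rintro ⟨x, y⟩ hc' hadj
      rw [mem_Ka] at hc'
      simp only at hadj
      have hcases : (x = -k ∧ y = 4*(n:ℤ) - k) ∨ (x = -k - 1 ∧ y = 4*(n:ℤ) - k - 1) := by
        omega
      rcases hcases with ⟨hx, hy⟩ | ⟨hx, hy⟩
      · left; simp [Prod.ext_iff, hx, hy]
      · right
        refine ⟨ldom n (k+1), ?_, ?_, ?_⟩
        · have : (2*(n:ℤ) - j) = k + 1 := by omega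
          rwa [this] at hIH
        · simp only [ldom, Finset.mem_insert, Finset.mem_singleton, Prod.ext_iff]
          omega
        · simp only [ldom, Finset.mem_insert, Finset.mem_singleton, Prod.ext_iff]
          push_neg
          constructor <;> intro h <;> omega

lemma Dset_subset {n : ℕ} (hn : 1 ≤ n) {P : Set (Finset (ℤ×ℤ))}
    (hP : IsTiling (Ka (4*n+1)) P) : Dset n ⊆ P := by
  rintro d (⟨k, hk0, hk2, rfl⟩ | ⟨k, hk1, hk2, rfl⟩)
  · have hj : (2*(n:ℤ) - ((2*(n:ℤ) - k).toNat : ℤ)) = k := by omega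
    have h := force_r hn hP (2*(n:ℤ) - k).toNat (by omega)
    rwa [hj] at h
  · have hj : (2*(n:ℤ) - ((2*(n:ℤ) - k).toNat : ℤ)) = k := by omega
    have h := force_l hn hP (2*(n:ℤ) - k).toNat (by omega)
    rwa [hj] at h

lemma Dset_dominoes {n : ℕ} {d : Finset (ℤ×ℤ)} (hd : d ∈ Dset n) : IsDomino d := by
  rcases hd with ⟨k, _, _, rfl⟩ | ⟨k, _, _, rfl⟩
  · exact ⟨(k, 4*n - k), (k - 1, 4*n - k), by
      simp only; rw [Int.abs_eq_natAbs, Int.abs_eq_natAbs]; omega, rfl⟩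
  · exact ⟨(-k - 1, 4*n - k), (-k, 4*n - k), by
      simp only; rw [Int.abs_eq_natAbs, Int.abs_eq_natAbs]; omega, rfl⟩

lemma Dset_union {n : ℕ} (hn : 1 ≤ n) :
    (⋃ d ∈ Dset n, (d : Set (ℤ×ℤ))) = Ka (4*n+1) \ Ka (4*n-1) := by
  ext ⟨x, y⟩
  simp only [Set.mem_iUnion, Finset.mem_coe, exists_prop, Set.mem_diff]
  constructor
  · rintro ⟨d, (⟨k, hk0, hk2, rfl⟩ | ⟨k, hk1, hk2, rfl⟩), hc⟩ <;>
    · simp only [rdom, ldom, Finset.mem_insert, Finset.mem_singleton, Prod.ext_iff] at hc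
      rw [mem_Ka, mem_Ka]
      constructor
      · omega
      · intro h; omega
  · rintro ⟨hin, hout⟩
    rw [mem_Ka] at hin hout
    simp only at hin hout ⊢
    have hgt : ¬ ((2*x+1).natAbs + (2*y+1).natAbs ≤ 2*(4*n-1)) := fun h =>
      hout ⟨h, hin.2⟩
    have hcases : (0 ≤ x ∧ x ≤ 2*(n:ℤ) ∧ x + y = 4*n) ∨
        (0 ≤ x ∧ x + 1 ≤ 2*(n:ℤ) ∧ x + y = 4*(n:ℤ) - 1) ∨
        (x = -1 ∧ y = 4*(n:ℤ)) ∨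
        (x ≤ -2 ∧ 1 ≤ -x-1 ∧ -x-1 ≤ 2*(n:ℤ) ∧ y - x = 4*(n:ℤ) + 1) ∨
        (x ≤ -1 ∧ 1 ≤ -x ∧ -x ≤ 2*(n:ℤ) ∧ y - x = 4*(n:ℤ)) := by omega
    rcases hcases with ⟨h1, h2, h3⟩ | ⟨h1, h2, h3⟩ | ⟨h1, h2⟩ | ⟨h1, h2, h3, h4⟩ | ⟨h1, h2, h3, h4⟩
    · exact ⟨rdom n x, Or.inl ⟨x, h1, h2, rfl⟩, by
        simp only [rdom, Finset.mem_insert, Finset.mem_singleton, Prod.mk.injEq,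
          true_and, and_true]; omega⟩
    · exact ⟨rdom n (x+1), Or.inl ⟨x+1, by omega, h2, rfl⟩, by
        simp only [rdom, Finset.mem_insert, Finset.mem_singleton, Prod.mk.injEq,
          true_and, and_true]; omega⟩
    · exact ⟨rdom n 0, Or.inl ⟨0, le_refl _, by omega, rfl⟩, by
        simp only [rdom, Finset.mem_insert, Finset.mem_singleton, Prod.mk.injEq,
          true_and, and_true]; omega⟩
    · exact ⟨ldom n (-x-1), Or.inr ⟨-x-1, h2, h3, rfl⟩, by
        simp only [ldom, Finset.mem_insert, Finset.mem_singleton, Prod.mk.injEq,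
          true_and, and_true]; omega⟩
    · exact ⟨ldom n (-x), Or.inr ⟨-x, h2, h3, rfl⟩, by
        simp only [ldom, Finset.mem_insert, Finset.mem_singleton, Prod.mk.injEq,
          true_and, and_true]; omega⟩

lemma Dset_pd (n : ℕ) : (Dset n).PairwiseDisjoint id := by
  rintro d hd e he hne
  simp only [Function.onFun, id_eq]
  rw [Finset.disjoint_left]
  rintro ⟨x, y⟩ hcd hce
  rcases hd with ⟨k, hk0, hk2, rfl⟩ | ⟨k, hk1, hk2, rfl⟩ <;>
      rcases he with ⟨l, hl0, hl2, rfl⟩ | ⟨l, hl1, hl2, rfl⟩ <;>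
      simp only [rdom, ldom, Finset.mem_insert, Finset.mem_singleton,
        Prod.mk.injEq] at hcd hce
  · exact hne (by rw [show k = l by omega])
  · omega
  · omega
  · exact hne (by rw [show k = l by omega])

lemma cells_subset {R : Set (ℤ×ℤ)} {P : Set (Finset (ℤ×ℤ))} (hP : IsTiling R P)
    {d : Finset (ℤ×ℤ)} (hd : d ∈ P) {c : ℤ×ℤ} (hc : c ∈ d) : c ∈ R :=
  hP.2.2 ▸ Set.mem_biUnion hd hc

lemma Ka_mono {n : ℕ} (hn : 1 ≤ n) : Ka (4*n-1) ⊆ Ka (4*n+1) := by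
  intro c hc
  rw [mem_Ka] at hc ⊢
  omega

lemma Dcell {n : ℕ} (hn : 1 ≤ n) {d : Finset (ℤ×ℤ)} (hd : d ∈ Dset n) {c : ℤ×ℤ}
    (hc : c ∈ d) : c ∈ Ka (4*n+1) \ Ka (4*n-1) := by
  rw [← Dset_union hn]
  exact Set.mem_biUnion hd hc

/-- adding the forced dominoes to a tiling of the small region -/
lemma tiling_union {n : ℕ} (hn : 1 ≤ n) {P : Set (Finset (ℤ×ℤ))}
    (hP : IsTiling (Ka (4*n-1)) P) : IsTiling (Ka (4*n+1)) (P ∪ Dset n) := by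
  refine ⟨?_, ?_, ?_⟩
  · rintro d (hd | hd)
    · exact hP.1 d hd
    · exact Dset_dominoes hd
  · rintro d (hd | hd) e (he | he) hne
    · exact hP.2.1 hd he hne
    · simp only [Function.onFun, id_eq]
      rw [Finset.disjoint_left]
      intro c hcd hce
      exact (Dcell hn he hce).2 (cells_subset hP hd hcd)
    · simp only [Function.onFun, id_eq]
      rw [Finset.disjoint_left]
      intro c hcd hce
      exact (Dcell hn hd hcd).2 (cells_subset hP he hce)
    · exact Dset_pd n hd he hne
  · rw [Set.biUnion_union, hP.2.2, Dset_union hn,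
      Set.union_diff_cancel (Ka_mono hn)]

/-- removing the forced dominoes from a tiling of the big region -/
lemma tiling_diff {n : ℕ} (hn : 1 ≤ n) {P : Set (Finset (ℤ×ℤ))}
    (hP : IsTiling (Ka (4*n+1)) P) : IsTiling (Ka (4*n-1)) (P \ Dset n) := by
  have hD := Dset_subset hn hP
  refine ⟨fun d hd => hP.1 d hd.1, hP.2.1.subset Set.diff_subset, ?_⟩
  ext c
  simp only [Set.mem_iUnion, Finset.mem_coe, exists_prop]
  constructor
  · rintro ⟨d, ⟨hdP, hdD⟩, hc⟩
    have hbig : c ∈ Ka (4*n+1) := cells_subset hP hdP hc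
    by_contra hsmall
    have hF : c ∈ Ka (4*n+1) \ Ka (4*n-1) := ⟨hbig, hsmall⟩
    rw [← Dset_union hn] at hF
    simp only [Set.mem_iUnion, Finset.mem_coe, exists_prop] at hF
    obtain ⟨e, heD, hce⟩ := hF
    have hne : e ≠ d := fun h => hdD (h ▸ heD)
    have := Finset.disjoint_left.mp (hP.2.1 (hD heD) hdP hne) hce
    exact this hc
  · intro hc
    have hbig : c ∈ Ka (4*n+1) := Ka_mono hn hc
    rw [← hP.2.2] at hbig
    simp only [Set.mem_iUnion, Finset.mem_coe, exists_prop] at hbig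
    obtain ⟨d, hdP, hcd⟩ := hbig
    refine ⟨d, ⟨hdP, fun hdD => ?_⟩, hcd⟩
    exact (Dcell hn hdD hcd).2 hc

lemma disj_small {n : ℕ} (hn : 1 ≤ n) {P : Set (Finset (ℤ×ℤ))}
    (hP : IsTiling (Ka (4*n-1)) P) : P ∩ Dset n ⊆ ∅ := by
  rintro d ⟨hdP, hdD⟩
  obtain ⟨u, v, -, rfl⟩ := hP.1 d hdP
  have h1 := cells_subset hP hdP (Finset.mem_insert_self u {v})
  have h2 := Dcell hn hdD (Finset.mem_insert_self u {v})
  exact (h2.2 h1).elim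


/-- `T(K_a(4n-1)) = T(K_a(4n+1))`. -/
theorem abutting_forced_odd (n : ℕ) (hn : 1 ≤ n) :
    numTilings (Ka (4 * n - 1)) = numTilings (Ka (4 * n + 1)) := by
  have himg : (fun P => P ∪ Dset n) '' {P | IsTiling (Ka (4*n-1)) P} =
      {P | IsTiling (Ka (4*n+1)) P} := by
    ext P
    simp only [Set.mem_image, Set.mem_setOf_eq]
    constructor
    · rintro ⟨Q, hQ, rfl⟩
      exact tiling_union hn hQ
    · intro hP
      exact ⟨P \ Dset n, tiling_diff hn hP,
        Set.diff_union_of_subset (Dset_subset hn hP)⟩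
  have hinj : Set.InjOn (fun P => P ∪ Dset n) {P | IsTiling (Ka (4*n-1)) P} := by
    intro P hP Q hQ h
    simp only at h
    have hP' : (P ∪ Dset n) \ Dset n = P :=
      Set.union_diff_cancel_right (disj_small hn hP)
    have hQ' : (Q ∪ Dset n) \ Dset n = Q :=
      Set.union_diff_cancel_right (disj_small hn hQ)
    rw [← hP', ← hQ', h]
  rw [numTilings, numTilings, ← himg, Set.ncard_image_of_injOn hinj]
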